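/- For g ∈ {α,β,γ} and A ⊆ [n], the normalized volume of C_{3,n} ∩ {x : S_{A,g}(x) ≤ 1−|A|} in ℤ^{3n} equals ∑_{i=0}^n (−2)^i C(n,i) (3n)!/(2n+i)!. -/

import Mathlib

open MeasureTheory Finset intervalIntegral
open scoped ENNReal

/-- polynomial part of the volume function -/
noncomputable def Pn (n : ℕ) (c : ℝ) : ℝ :=
  ∑ k ∈ Finset.range (n + 1),
    (-2 : ℝ) ^ k * (n.choose k : ℝ) * c ^ (2 * n + k) / ((2 * n + k).factorial : ℝ)

lemma Pn_zero (c : ℝ) : Pn 0 c = 1 := by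
  simp [Pn]

lemma Pn_continuous (n : ℕ) : Continuous (Pn n) := by
  unfold Pn
  fun_prop

/-- the per-term coefficient -/
noncomputable def ak (n k : ℕ) : ℝ := (-2 : ℝ) ^ k * (n.choose k : ℝ) / ((2 * n + k).factorial : ℝ)

lemma Pn_eq (n : ℕ) (c : ℝ) : Pn n c = ∑ k ∈ range (n + 1), ak n k * c ^ (2 * n + k) := by
  unfold Pn ak; apply Finset.sum_congr rfl; intro k _; ring

private lemma fact_cast_succ (m : ℕ) :
    ((m + 1).factorial : ℝ) = ((m : ℝ) + 1) * (m.factorial : ℝ) := by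
  rw [Nat.factorial_succ]; push_cast; ring

/-- the key algebraic identity (Pascal recursion) -/
lemma alg (n : ℕ) (c : ℝ) :
    ∑ k ∈ range (n + 1), ak n k *
        ((1 - c) * c ^ (2 * n + k + 2) / (((2 * n + k : ℕ) : ℝ) + 1) / (((2 * n + k : ℕ) : ℝ) + 2)
          + c ^ (2 * n + k + 3) / ((((2 * n + k : ℕ) : ℝ) + 2) * (((2 * n + k : ℕ) : ℝ) + 3)))
      = Pn (n + 1) c := by
  set X : ℕ → ℝ := fun j => c ^ (2 * n + 2 + j) / (((2 * n + 2 + j).factorial : ℝ)) with hX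
  set f : ℕ → ℝ := fun j => (-2 : ℝ) ^ j * (n.choose j : ℝ) * X j with hf
  set g : ℕ → ℝ := fun k => (-2 : ℝ) ^ (k + 1) * (n.choose k : ℝ) * X (k + 1) with hg
  have hterm : ∀ k, ak n k *
        ((1 - c) * c ^ (2 * n + k + 2) / (((2 * n + k : ℕ) : ℝ) + 1) / (((2 * n + k : ℕ) : ℝ) + 2)
          + c ^ (2 * n + k + 3) / ((((2 * n + k : ℕ) : ℝ) + 2) * (((2 * n + k : ℕ) : ℝ) + 3)))
      = f k + g k := by
    intro k
    set m := 2 * n + k with hm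
    have h2 : 2 * n + 2 + k = m + 2 := by omega
    have h3 : 2 * n + 2 + (k + 1) = m + 3 := by omega
    have e2 : ((m + 2).factorial : ℝ) = ((m : ℝ) + 2) * (((m : ℝ) + 1) * (m.factorial : ℝ)) := by
      rw [show m + 2 = (m + 1) + 1 by ring, fact_cast_succ, fact_cast_succ]; push_cast; ring
    have e3 : ((m + 3).factorial : ℝ)
        = ((m : ℝ) + 3) * (((m : ℝ) + 2) * (((m : ℝ) + 1) * (m.factorial : ℝ))) := by
      rw [show m + 3 = (m + 2) + 1 by ring, fact_cast_succ, e2]; push_cast; ring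
    have hfac : (m.factorial : ℝ) ≠ 0 := Nat.cast_ne_zero.2 m.factorial_ne_zero
    have h1 : ((m : ℝ) + 1) ≠ 0 := by positivity
    have h2' : ((m : ℝ) + 2) ≠ 0 := by positivity
    have h3' : ((m : ℝ) + 3) ≠ 0 := by positivity
    simp only [hf, hg, hX, ak, h2, h3, e2, e3]
    have hc2 : c ^ (m + 3) = c ^ (m + 2) * c := by ring
    field_simp
    ring
  rw [Finset.sum_congr rfl fun k _ => hterm k, Finset.sum_add_distrib]
  have hPn : Pn (n + 1) c = ∑ j ∈ range (n + 2), (-2 : ℝ) ^ j * ((n + 1).choose j : ℝ) * X j := by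
    unfold Pn
    apply Finset.sum_congr rfl
    intro j _
    have : 2 * (n + 1) + j = 2 * n + 2 + j := by omega
    rw [this, hX]; ring
  rw [hPn]
  conv_rhs => rw [Finset.sum_range_succ']
  have hsplit : ∀ k, (-2 : ℝ) ^ (k + 1) * (((n + 1).choose (k + 1) : ℕ) : ℝ) * X (k + 1)
      = g k + f (k + 1) := by
    intro k
    rw [Nat.choose_succ_succ]
    push_cast
    simp only [hf, hg]
    ring
  conv_rhs => rw [Finset.sum_congr rfl fun k _ => hsplit k, Finset.sum_add_distrib]
  have hf0 : (-2 : ℝ) ^ 0 * (((n + 1).choose 0 : ℕ) : ℝ) * X 0 = f 0 := by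
    simp [hf]
  rw [hf0]
  have : ∑ k ∈ range (n + 1), f (k + 1) + f 0 = ∑ k ∈ range (n + 1), f k := by
    rw [← Finset.sum_range_succ' f (n + 1), Finset.sum_range_succ]
    simp [hf, Nat.choose_succ_self]
  linarith [this]

lemma int_monomial (a : ℝ) (p : ℕ) (t c : ℝ) :
    ∫ z in t..c, a * z ^ p = a * (c ^ (p + 1) - t ^ (p + 1)) / ((p : ℝ) + 1) := by
  rw [intervalIntegral.integral_const_mul, integral_pow]; ring

noncomputable def Qf (n : ℕ) (c d : ℝ) : ℝ :=
  ∑ k ∈ range (n + 1), ak n k *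
    ((1 - c) * d ^ (2 * n + k + 1) / (((2 * n + k : ℕ) : ℝ) + 1)
      + d ^ (2 * n + k + 2) / (((2 * n + k : ℕ) : ℝ) + 2))

lemma L1' (n : ℕ) (c d : ℝ) :
    ∫ u in (0:ℝ)..d, ((1 - c) + u) * Pn n u = Qf n c d := by
  have h : ∀ u : ℝ, ((1 - c) + u) * Pn n u
      = ∑ k ∈ range (n + 1), ((ak n k * (1 - c)) * u ^ (2 * n + k) + ak n k * u ^ (2 * n + k + 1)) := by
    intro u
    rw [Pn_eq, Finset.mul_sum]
    exact Finset.sum_congr rfl fun k _ => by ring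
  simp_rw [h]
  rw [intervalIntegral.integral_finset_sum]
  · unfold Qf
    apply Finset.sum_congr rfl
    intro k _
    rw [intervalIntegral.integral_add (((by fun_prop : Continuous _).intervalIntegrable _ _)) (((by fun_prop : Continuous _).intervalIntegrable _ _)), int_monomial, int_monomial]
    have h1 : (((2 * n + k : ℕ) : ℝ) + 1) ≠ 0 := by positivity
    have h2 : (((2 * n + k : ℕ) : ℝ) + 2) ≠ 0 := by positivity
    have e : ((2 * n + k + 1 : ℕ) : ℝ) + 1 = ((2 * n + k : ℕ) : ℝ) + 2 := by push_cast; ring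
    rw [e]
    simp [zero_pow]
    field_simp
  · intro k _
    apply Continuous.intervalIntegrable
    fun_prop

lemma L1 (n : ℕ) (c v : ℝ) :
    ∫ w in (0:ℝ)..(c - v), (1 - v - w) * Pn n (c - v - w) = Qf n c (c - v) := by
  have h : ∀ w : ℝ, (1 - v - w) * Pn n (c - v - w)
      = (fun u => ((1 - c) + u) * Pn n u) ((c - v) - w) := by
    intro w; simp only; ring_nf
  simp_rw [h]
  rw [intervalIntegral.integral_comp_sub_left (fun u => ((1 - c) + u) * Pn n u) (c - v)]
  simp only [sub_self, sub_zero]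
  exact L1' n c (c - v)

lemma L2 (n : ℕ) (c : ℝ) :
    ∫ v in (0:ℝ)..c, Qf n c (c - v) = Pn (n + 1) c := by
  rw [intervalIntegral.integral_comp_sub_left (Qf n c) c]
  simp only [sub_self, sub_zero]
  rw [← alg n c]
  unfold Qf
  rw [intervalIntegral.integral_finset_sum (fun k _ => by
    apply Continuous.intervalIntegrable; fun_prop)]
  apply Finset.sum_congr rfl
  intro k _
  have h : ∀ u : ℝ, ak n k * ((1 - c) * u ^ (2 * n + k + 1) / (((2 * n + k : ℕ) : ℝ) + 1)
        + u ^ (2 * n + k + 2) / (((2 * n + k : ℕ) : ℝ) + 2))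
      = (ak n k * (1 - c) / (((2 * n + k : ℕ) : ℝ) + 1)) * u ^ (2 * n + k + 1)
        + (ak n k / (((2 * n + k : ℕ) : ℝ) + 2)) * u ^ (2 * n + k + 2) := fun u => by ring
  simp_rw [h]
  rw [intervalIntegral.integral_add (((by fun_prop : Continuous _).intervalIntegrable _ _)) (((by fun_prop : Continuous _).intervalIntegrable _ _)), int_monomial, int_monomial]
  have h1 : (((2 * n + k : ℕ) : ℝ) + 1) ≠ 0 := by positivity
  have h2 : (((2 * n + k : ℕ) : ℝ) + 2) ≠ 0 := by positivity
  have h3 : (((2 * n + k : ℕ) : ℝ) + 3) ≠ 0 := by positivity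
  have e1 : ((2 * n + k + 1 : ℕ) : ℝ) + 1 = ((2 * n + k : ℕ) : ℝ) + 2 := by push_cast; ring
  have e2 : ((2 * n + k + 2 : ℕ) : ℝ) + 1 = ((2 * n + k : ℕ) : ℝ) + 3 := by push_cast; ring
  rw [e1, e2]
  simp [zero_pow]
  field_simp

lemma Pn_nonneg : ∀ n : ℕ, ∀ c : ℝ, 0 ≤ c → c ≤ 1 → 0 ≤ Pn n c := by
  intro n
  induction n with
  | zero => intro c _ _; rw [Pn_zero]; norm_num
  | succ n ih =>
    intro c hc0 hc1
    rw [← L2 n c]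
    apply intervalIntegral.integral_nonneg hc0
    intro v hv
    rw [← L1' n c (c - v)]
    apply intervalIntegral.integral_nonneg (by linarith [hv.2])
    intro u hu
    have h1 : 0 ≤ (1 - c) + u := by linarith [hu.1]
    have h2 : 0 ≤ Pn n u := ih u hu.1 (by rcases hu with ⟨h,h'⟩; rcases hv with ⟨a,b⟩; linarith)
    positivity

lemma Qf_nonneg (n : ℕ) (c d : ℝ) (hc : c ≤ 1) (hd : 0 ≤ d) (hd1 : d ≤ 1) : 0 ≤ Qf n c d := by
  rw [← L1' n c d]
  apply intervalIntegral.integral_nonneg hd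
  intro u hu
  have h1 : 0 ≤ (1 - c) + u := by linarith [hu.1]
  have h2 : 0 ≤ Pn n u := Pn_nonneg n u hu.1 (by linarith [hu.2])
  positivity

noncomputable def Phi (n : ℕ) (c t : ℝ) : ℝ :=
  ∑ k ∈ range (n + 1), ak n k *
    (c ^ (2 * n + k + 2) / ((((2 * n + k : ℕ) : ℝ) + 1) * (((2 * n + k : ℕ) : ℝ) + 2))
      - c * t ^ (2 * n + k + 1) / (((2 * n + k : ℕ) : ℝ) + 1)
      + t ^ (2 * n + k + 2) / (((2 * n + k : ℕ) : ℝ) + 2))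

lemma R1 (n : ℕ) (c t : ℝ) :
    ∫ z in t..c, (c - z) * Pn n z = Phi n c t := by
  have h : ∀ z : ℝ, (c - z) * Pn n z
      = ∑ k ∈ range (n + 1), ((ak n k * c) * z ^ (2 * n + k) + (-ak n k) * z ^ (2 * n + k + 1)) := by
    intro z
    rw [Pn_eq, Finset.mul_sum]
    exact Finset.sum_congr rfl fun k _ => by ring
  simp_rw [h]
  rw [intervalIntegral.integral_finset_sum (fun k _ => by
    apply Continuous.intervalIntegrable; fun_prop)]
  unfold Phi
  apply Finset.sum_congr rfl
  intro k _
  rw [intervalIntegral.integral_add (((by fun_prop : Continuous _).intervalIntegrable _ _))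
    (((by fun_prop : Continuous _).intervalIntegrable _ _)), int_monomial, int_monomial]
  have h1 : (((2 * n + k : ℕ) : ℝ) + 1) ≠ 0 := by positivity
  have h2 : (((2 * n + k : ℕ) : ℝ) + 2) ≠ 0 := by positivity
  have e1 : ((2 * n + k + 1 : ℕ) : ℝ) + 1 = ((2 * n + k : ℕ) : ℝ) + 2 := by push_cast; ring
  rw [e1]
  have hc2 : c ^ (2 * n + k + 2) = c * c ^ (2 * n + k + 1) := by ring
  field_simp
  ring

lemma R2 (n : ℕ) (c : ℝ) :
    ∫ t in (0:ℝ)..c, Phi n c t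
      = ∑ k ∈ range (n + 1), ak n k *
          (c ^ (2 * n + k + 3) / ((((2 * n + k : ℕ) : ℝ) + 2) * (((2 * n + k : ℕ) : ℝ) + 3))) := by
  unfold Phi
  rw [intervalIntegral.integral_finset_sum (fun k _ => by
    apply Continuous.intervalIntegrable; fun_prop)]
  apply Finset.sum_congr rfl
  intro k _
  have h : ∀ t : ℝ, ak n k *
        (c ^ (2 * n + k + 2) / ((((2 * n + k : ℕ) : ℝ) + 1) * (((2 * n + k : ℕ) : ℝ) + 2))
          - c * t ^ (2 * n + k + 1) / (((2 * n + k : ℕ) : ℝ) + 1)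
          + t ^ (2 * n + k + 2) / (((2 * n + k : ℕ) : ℝ) + 2))
      = (ak n k * c ^ (2 * n + k + 2) / ((((2 * n + k : ℕ) : ℝ) + 1) * (((2 * n + k : ℕ) : ℝ) + 2))) * t ^ 0
        + ((-(ak n k * c) / (((2 * n + k : ℕ) : ℝ) + 1)) * t ^ (2 * n + k + 1)
        + (ak n k / (((2 * n + k : ℕ) : ℝ) + 2)) * t ^ (2 * n + k + 2)) := fun t => by
    simp; ring
  simp_rw [h]
  rw [intervalIntegral.integral_add (((by fun_prop : Continuous _).intervalIntegrable _ _))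
    (((by fun_prop : Continuous _).intervalIntegrable _ _)),
    intervalIntegral.integral_add (((by fun_prop : Continuous _).intervalIntegrable _ _))
    (((by fun_prop : Continuous _).intervalIntegrable _ _)), int_monomial, int_monomial, int_monomial]
  have h1 : (((2 * n + k : ℕ) : ℝ) + 1) ≠ 0 := by positivity
  have h2 : (((2 * n + k : ℕ) : ℝ) + 2) ≠ 0 := by positivity
  have h3 : (((2 * n + k : ℕ) : ℝ) + 3) ≠ 0 := by positivity
  have e1 : ((2 * n + k + 1 : ℕ) : ℝ) + 1 = ((2 * n + k : ℕ) : ℝ) + 2 := by push_cast; ring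
  have e2 : ((2 * n + k + 2 : ℕ) : ℝ) + 1 = ((2 * n + k : ℕ) : ℝ) + 3 := by push_cast; ring
  rw [e1, e2]
  norm_num
  field_simp
  ring

lemma R3 (n : ℕ) (c : ℝ) :
    (1 - c) * Phi n c 0
        + (∑ k ∈ range (n + 1), ak n k *
            (c ^ (2 * n + k + 3) / ((((2 * n + k : ℕ) : ℝ) + 2) * (((2 * n + k : ℕ) : ℝ) + 3))))
      = Pn (n + 1) c := by
  rw [← alg n c]
  unfold Phi
  rw [Finset.mul_sum, ← Finset.sum_add_distrib]
  apply Finset.sum_congr rfl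
  intro k _
  have h1 : (((2 * n + k : ℕ) : ℝ) + 1) ≠ 0 := by positivity
  have h2 : (((2 * n + k : ℕ) : ℝ) + 2) ≠ 0 := by positivity
  have h3 : (((2 * n + k : ℕ) : ℝ) + 3) ≠ 0 := by positivity
  rw [zero_pow (by omega), zero_pow (by omega)]
  field_simp
  ring

lemma Phi_nonneg (n : ℕ) (c t : ℝ) (ht0 : 0 ≤ t) (htc : t ≤ c) (hc : c ≤ 1) : 0 ≤ Phi n c t := by
  rw [← R1 n c t]
  apply intervalIntegral.integral_nonneg htc
  intro z hz
  have h1 : 0 ≤ c - z := by linarith [hz.2]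
  have h2 : 0 ≤ Pn n z := Pn_nonneg n z (le_trans ht0 hz.1) (by linarith [hz.2])
  positivity

def cube3 : Set (Fin 3 → ℝ) := {y | (∀ j, 0 ≤ y j) ∧ y 0 + y 1 + y 2 ≤ 1}

lemma pair_sum (g : Fin 3) (y : Fin 3 → ℝ) :
    y (g + 1) + y (g + 2) = y (g.succAbove 0) + y (g.succAbove 1) := by
  fin_cases g <;> simp [Fin.succAbove, Fin.lt_def] <;> ring

lemma three_sum (g : Fin 3) (y : Fin 3 → ℝ) :
    y 0 + y 1 + y 2 = y g + (y (g.succAbove 0) + y (g.succAbove 1)) := by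
  fin_cases g <;> simp [Fin.succAbove, Fin.lt_def] <;> ring

lemma mem_cube3_ins (g : Fin 3) (u : ℝ) (q : Fin 2 → ℝ) :
    g.insertNth u q ∈ cube3 ↔ (0 ≤ q 0 ∧ 0 ≤ q 1) ∧ (0 ≤ u ∧ u + (q 0 + q 1) ≤ 1) := by
  unfold cube3
  rw [Set.mem_setOf_eq, Fin.forall_iff_succAbove g, three_sum g]
  simp only [Fin.insertNth_apply_same, Fin.insertNth_apply_succAbove, Fin.forall_fin_two]
  tauto

lemma isClosed_cube3 : IsClosed cube3 := by
  have : cube3 = (⋂ j, {y : Fin 3 → ℝ | 0 ≤ y j}) ∩ {y | y 0 + y 1 + y 2 ≤ 1} := by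
    ext y; simp [cube3, Set.mem_iInter]
  rw [this]
  exact (isClosed_iInter fun j => isClosed_le continuous_const (continuous_apply j)).inter
    (isClosed_le (by fun_prop) continuous_const)

noncomputable def Wf (n : ℕ) (c : ℝ) : ℝ := if 0 ≤ c then Pn n c else 0

lemma lint_Icc {a b : ℝ} (hab : a ≤ b) {f : ℝ → ℝ} (hf : Continuous f)
    (hnn : ∀ x ∈ Set.Icc a b, 0 ≤ f x) :
    ∫⁻ x, (Set.Icc a b).indicator (fun x => ENNReal.ofReal (f x)) x
      = ENNReal.ofReal (∫ x in a..b, f x) := by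
  rw [lintegral_indicator measurableSet_Icc,
    ← ofReal_integral_eq_lintegral_ofReal (hf.integrableOn_Icc)
      ((ae_restrict_iff' measurableSet_Icc).2 (Filter.Eventually.of_forall hnn))]
  congr 1
  rw [MeasureTheory.integral_Icc_eq_integral_Ioc, intervalIntegral.integral_of_le hab]

lemma Wf_measurable (n : ℕ) : Measurable (Wf n) :=
  Measurable.ite (measurableSet_le measurable_const measurable_id)
    (Pn_continuous n).measurable measurable_const

lemma Wf_nonneg (n : ℕ) (c : ℝ) (hc : c ≤ 1) : 0 ≤ Wf n c := by
  unfold Wf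
  split
  · exact Pn_nonneg n c ‹_› hc
  · exact le_refl 0

noncomputable def tau (b : Bool) (s : ℝ) : ℝ := if b then 1 - s else s

lemma tau_nonneg (b : Bool) {s : ℝ} (h0 : 0 ≤ s) (h1 : s ≤ 1) : 0 ≤ tau b s := by
  cases b <;> simp [tau] <;> linarith

lemma s_bounds {y : Fin 3 → ℝ} (hy : y ∈ cube3) (g : Fin 3) :
    0 ≤ y (g + 1) + y (g + 2) ∧ y (g + 1) + y (g + 2) ≤ 1 := by
  obtain ⟨hnn, hsum⟩ := hy
  rw [pair_sum]
  constructor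
  · have := hnn (g.succAbove 0); have := hnn (g.succAbove 1); linarith
  · have h3 := three_sum g y
    have := hnn g
    linarith

lemma Qf_continuous (n : ℕ) (c : ℝ) : Continuous (Qf n c) := by
  unfold Qf; fun_prop

lemma Phi_continuous (n : ℕ) (c : ℝ) : Continuous (Phi n c) := by
  unfold Phi; fun_prop

lemma contA (n : ℕ) (c v : ℝ) : Continuous fun w : ℝ => (1 - v - w) * Pn n (c - v - w) := by
  apply Continuous.mul (by fun_prop)
  exact (Pn_continuous n).comp (by fun_prop)

lemma contB (n : ℕ) (c : ℝ) : Continuous fun v : ℝ => Qf n c (c - v) :=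
  (Qf_continuous n c).comp (by fun_prop)

lemma contC (n : ℕ) (c v : ℝ) : Continuous fun w : ℝ => (1 - v - w) * Pn n (c - 1 + v + w) := by
  apply Continuous.mul (by fun_prop)
  exact (Pn_continuous n).comp (by fun_prop)

lemma contD (n : ℕ) (c : ℝ) : Continuous fun v : ℝ => Phi n c (max (c - 1 + v) 0) :=
  (Phi_continuous n c).comp ((by fun_prop : Continuous fun v : ℝ => c - 1 + v).max continuous_const)

lemma inner3 (n : ℕ) (c : ℝ) (hc : c ≤ 1) (g : Fin 3) (b : Bool) :
    ∫⁻ y : Fin 3 → ℝ, cube3.indicator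
        (fun y => ENNReal.ofReal (Wf n (c - tau b (y (g + 1) + y (g + 2))))) y
      = ENNReal.ofReal (Wf (n + 1) c) := by
  have htau : Measurable fun s : ℝ => c - tau b s := by
    cases b <;> (simp only [tau]; norm_num) <;> fun_prop
  have hWtau : Measurable fun s : ℝ => ENNReal.ofReal (Wf n (c - tau b s)) :=
    Measurable.ennreal_ofReal ((Wf_measurable n).comp htau)
  have hmeas_h : Measurable (cube3.indicator
      (fun y : Fin 3 → ℝ => ENNReal.ofReal (Wf n (c - tau b (y (g + 1) + y (g + 2)))))) :=
    (hWtau.comp (by fun_prop : Measurable fun y : Fin 3 → ℝ => y (g + 1) + y (g + 2))).indicator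
      isClosed_cube3.measurableSet
  by_cases hc0 : 0 ≤ c
  swap
  · push_neg at hc0
    have hzero : ∀ y : Fin 3 → ℝ, cube3.indicator
        (fun y => ENNReal.ofReal (Wf n (c - tau b (y (g + 1) + y (g + 2))))) y = 0 := by
      intro y
      by_cases hy : y ∈ cube3
      · rw [Set.indicator_of_mem hy]
        obtain ⟨hs0, hs1⟩ := s_bounds hy g
        have : Wf n (c - tau b (y (g + 1) + y (g + 2))) = 0 := by
          rw [Wf, if_neg]
          push_neg
          have := tau_nonneg b hs0 hs1
          linarith
        rw [this]; simp
      · exact Set.indicator_of_notMem hy _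
    rw [lintegral_congr hzero, lintegral_zero, Wf, if_neg (by push_neg; linarith), ENNReal.ofReal_zero]
  -- main case
  set e3 := MeasurableEquiv.piFinSuccAbove (fun _ : Fin 3 => ℝ) g with he3
  have h1 := ((MeasurePreserving.symm e3
    (volume_preserving_piFinSuccAbove (fun _ : Fin 3 => ℝ) g)).lintegral_comp hmeas_h).symm
  rw [h1]
  have hcomp : Measurable fun p : ℝ × (Fin 2 → ℝ) => cube3.indicator
      (fun y => ENNReal.ofReal (Wf n (c - tau b (y (g + 1) + y (g + 2))))) (e3.symm p) :=
    hmeas_h.comp e3.symm.measurable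
  rw [Measure.volume_eq_prod, lintegral_prod_symm _ hcomp.aemeasurable]
  have hsymm : ∀ (u : ℝ) (q : Fin 2 → ℝ),
      (MeasurableEquiv.piFinSuccAbove (fun _ : Fin 3 => ℝ) g).symm (u, q) = g.insertNth u q := by
    intro u q; rfl
  set G' : ℝ × ℝ → ℝ≥0∞ := fun p =>
    if 0 ≤ p.1 ∧ 0 ≤ p.2 then
      ENNReal.ofReal (1 - (p.1 + p.2)) * ENNReal.ofReal (Wf n (c - tau b (p.1 + p.2)))
    else 0 with hG'
  have hG'meas : Measurable G' := by
    apply Measurable.ite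
    · exact ((isClosed_le continuous_const continuous_fst).inter
        (isClosed_le continuous_const continuous_snd)).measurableSet
    · exact (Measurable.ennreal_ofReal (by fun_prop)).mul
        (hWtau.comp (by fun_prop : Measurable fun p : ℝ × ℝ => p.1 + p.2))
    · exact measurable_const
  have hG : ∀ q : Fin 2 → ℝ,
      (∫⁻ u, cube3.indicator
        (fun y => ENNReal.ofReal (Wf n (c - tau b (y (g + 1) + y (g + 2)))))
        ((MeasurableEquiv.piFinSuccAbove (fun _ : Fin 3 => ℝ) g).symm (u, q)))
      = G' (q 0, q 1) := by
    intro q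
    have hval : ∀ u : ℝ, (g.insertNth u q : Fin 3 → ℝ) (g + 1)
        + (g.insertNth u q : Fin 3 → ℝ) (g + 2) = q 0 + q 1 := by
      intro u; rw [pair_sum]; simp [Fin.insertNth_apply_succAbove]
    by_cases hq : 0 ≤ q 0 ∧ 0 ≤ q 1
    · have hfun : (fun u : ℝ => cube3.indicator
          (fun y => ENNReal.ofReal (Wf n (c - tau b (y (g + 1) + y (g + 2)))))
          (g.insertNth u q))
          = (Set.Icc 0 (1 - (q 0 + q 1))).indicator
            (fun _ => ENNReal.ofReal (Wf n (c - tau b (q 0 + q 1)))) := by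
        funext u
        by_cases hu : u ∈ Set.Icc 0 (1 - (q 0 + q 1))
        · rw [Set.indicator_of_mem hu,
            Set.indicator_of_mem (show g.insertNth u q ∈ cube3 from
              (mem_cube3_ins g u q).2 ⟨hq, ⟨hu.1, by have := hu.2; linarith⟩⟩), hval]
        · rw [Set.indicator_of_notMem hu, Set.indicator_of_notMem]
          intro hmem
          obtain ⟨_, hu0, hu1⟩ := (mem_cube3_ins g u q).1 hmem
          exact hu ⟨hu0, by linarith⟩
      simp_rw [hsymm]
      rw [hfun, lintegral_indicator measurableSet_Icc, setLIntegral_const, Real.volume_Icc,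
        sub_zero, mul_comm]
      exact (if_pos hq).symm
    · simp_rw [hsymm]
      have hzero : ∀ u : ℝ, cube3.indicator
          (fun y => ENNReal.ofReal (Wf n (c - tau b (y (g + 1) + y (g + 2)))))
          (g.insertNth u q) = 0 := by
        intro u
        apply Set.indicator_of_notMem
        intro hmem
        exact hq ((mem_cube3_ins g u q).1 hmem).1
      rw [lintegral_congr hzero, lintegral_zero]
      exact (if_neg hq).symm
  rw [lintegral_congr hG]
  have hC : (∫⁻ q : Fin 2 → ℝ, G' (q 0, q 1)) = ∫⁻ p : ℝ × ℝ, G' p := by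
    have := (volume_preserving_finTwoArrow ℝ).lintegral_comp hG'meas
    rw [← this]
    apply lintegral_congr
    intro q
    congr 1
  rw [hC, Measure.volume_eq_prod, lintegral_prod _ hG'meas.aemeasurable]
  cases b
  · -- unreflected
    have hE : ∀ v : ℝ, (∫⁻ w, G' (v, w))
        = (Set.Icc (0:ℝ) c).indicator (fun v => ENNReal.ofReal (Qf n c (c - v))) v := by
      intro v
      by_cases hv : v ∈ Set.Icc (0:ℝ) c
      · obtain ⟨h0v, hvc⟩ := hv
        have hfun : (fun w : ℝ => G' (v, w)) = (Set.Icc 0 (c - v)).indicator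
            (fun w => ENNReal.ofReal ((1 - v - w) * Pn n (c - v - w))) := by
          funext w
          by_cases hw : w ∈ Set.Icc (0:ℝ) (c - v)
          · obtain ⟨hw0, hwc⟩ := hw
            rw [Set.indicator_of_mem (Set.mem_Icc.2 ⟨hw0, hwc⟩)]
            show (if 0 ≤ v ∧ 0 ≤ w then
                ENNReal.ofReal (1 - (v + w)) * ENNReal.ofReal (Wf n (c - tau false (v + w)))
              else 0) = _
            rw [if_pos ⟨h0v, hw0⟩]
            have hWf : Wf n (c - tau false (v + w)) = Pn n (c - v - w) := by
              rw [show tau false (v + w) = v + w from rfl, Wf, if_pos (by linarith)]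
              ring_nf
            rw [hWf, ← ENNReal.ofReal_mul (by linarith : (0:ℝ) ≤ 1 - (v + w))]
            congr 1
            ring
          · rw [Set.indicator_of_notMem hw]
            show (if 0 ≤ v ∧ 0 ≤ w then
                ENNReal.ofReal (1 - (v + w)) * ENNReal.ofReal (Wf n (c - tau false (v + w)))
              else 0) = 0
            by_cases hw0 : 0 ≤ w
            · rw [if_pos ⟨h0v, hw0⟩]
              have hwc : ¬ w ≤ c - v := fun h => hw (Set.mem_Icc.2 ⟨hw0, h⟩)
              push_neg at hwc
              have : Wf n (c - tau false (v + w)) = 0 := by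
                rw [show tau false (v + w) = v + w from rfl, Wf, if_neg (by push_neg; linarith)]
              rw [this]
              simp
            · rw [if_neg fun hcon => hw0 hcon.2]
        rw [hfun, lint_Icc (by linarith) (contA n c v)
          (fun w hw => mul_nonneg (by rcases Set.mem_Icc.1 hw with ⟨h1, h2⟩; linarith)
            (Pn_nonneg n _ (by rcases Set.mem_Icc.1 hw with ⟨h1, h2⟩; linarith)
              (by rcases Set.mem_Icc.1 hw with ⟨h1, h2⟩; linarith))),
          L1 n c v, Set.indicator_of_mem (Set.mem_Icc.2 ⟨h0v, hvc⟩)]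
      · rw [Set.indicator_of_notMem hv]
        by_cases hv0 : 0 ≤ v
        · have hvc : c < v := by
            by_contra h
            push_neg at h
            exact hv (Set.mem_Icc.2 ⟨hv0, h⟩)
          have hzero : ∀ w : ℝ, G' (v, w) = 0 := by
            intro w
            show (if 0 ≤ v ∧ 0 ≤ w then
                ENNReal.ofReal (1 - (v + w)) * ENNReal.ofReal (Wf n (c - tau false (v + w)))
              else 0) = 0
            by_cases hw0 : 0 ≤ w
            · rw [if_pos ⟨hv0, hw0⟩]
              have : Wf n (c - tau false (v + w)) = 0 := by
                rw [show tau false (v + w) = v + w from rfl, Wf, if_neg (by push_neg; linarith)]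
              rw [this]
              simp
            · rw [if_neg fun hcon => hw0 hcon.2]
          rw [lintegral_congr hzero, lintegral_zero]
        · have hzero : ∀ w : ℝ, G' (v, w) = 0 := fun w => if_neg fun hcon => hv0 hcon.1
          rw [lintegral_congr hzero, lintegral_zero]
    rw [lintegral_congr hE, lint_Icc hc0 (contB n c)
      (fun v hv => Qf_nonneg n c (c - v) hc (by rcases Set.mem_Icc.1 hv with ⟨h1, h2⟩; linarith)
        (by rcases Set.mem_Icc.1 hv with ⟨h1, h2⟩; linarith)),
      L2 n c]
    simp only [Wf, if_pos hc0]
  · -- reflected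
    have hE : ∀ v : ℝ, (∫⁻ w, G' (v, w))
        = (Set.Icc (0:ℝ) 1).indicator
            (fun v => ENNReal.ofReal (Phi n c (max (c - 1 + v) 0))) v := by
      intro v
      by_cases hv : v ∈ Set.Icc (0:ℝ) 1
      · obtain ⟨h0v, hv1⟩ := hv
        set L := max 0 (1 - c - v) with hL
        have hL0 : 0 ≤ L := le_max_left _ _
        have hLU : L ≤ 1 - v := max_le (by linarith) (by linarith)
        have harg0 : ∀ w : ℝ, L ≤ w → 0 ≤ c - 1 + v + w := by
          intro w hwL
          rcases le_or_gt (1 - c - v) 0 with h | h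
          · have hw0 : 0 ≤ w := le_trans hL0 hwL
            linarith
          · have hLe : L = 1 - c - v := max_eq_right h.le
            rw [hLe] at hwL
            linarith
        have hfun : (fun w : ℝ => G' (v, w)) = (Set.Icc L (1 - v)).indicator
            (fun w => ENNReal.ofReal ((1 - v - w) * Pn n (c - 1 + v + w))) := by
          funext w
          by_cases hw : w ∈ Set.Icc L (1 - v)
          · obtain ⟨hwL, hwU⟩ := hw
            have hw0 : 0 ≤ w := le_trans hL0 hwL
            rw [Set.indicator_of_mem (Set.mem_Icc.2 ⟨hwL, hwU⟩)]
            show (if 0 ≤ v ∧ 0 ≤ w then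
                ENNReal.ofReal (1 - (v + w)) * ENNReal.ofReal (Wf n (c - tau true (v + w)))
              else 0) = _
            rw [if_pos ⟨h0v, hw0⟩]
            have hWf : Wf n (c - tau true (v + w)) = Pn n (c - 1 + v + w) := by
              rw [show tau true (v + w) = 1 - (v + w) from rfl, Wf,
                if_pos (by have := harg0 w hwL; linarith)]
              ring_nf
            rw [hWf, ← ENNReal.ofReal_mul (by linarith : (0:ℝ) ≤ 1 - (v + w))]
            congr 1
            ring
          · rw [Set.indicator_of_notMem hw]
            show (if 0 ≤ v ∧ 0 ≤ w then
                ENNReal.ofReal (1 - (v + w)) * ENNReal.ofReal (Wf n (c - tau true (v + w)))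
              else 0) = 0
            by_cases hw0 : 0 ≤ w
            · rw [if_pos ⟨h0v, hw0⟩]
              by_cases hwU : w ≤ 1 - v
              · have hwL : w < L := by
                  by_contra h
                  push_neg at h
                  exact hw (Set.mem_Icc.2 ⟨h, hwU⟩)
                have hneg : c - 1 + v + w < 0 := by
                  rcases le_or_gt (1 - c - v) 0 with h | h
                  · exfalso
                    have : L = 0 := max_eq_left h
                    rw [this] at hwL
                    linarith
                  · have hLe : L = 1 - c - v := max_eq_right h.le
                    rw [hLe] at hwL
                    linarith
                have : Wf n (c - tau true (v + w)) = 0 := by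
                  rw [show tau true (v + w) = 1 - (v + w) from rfl, Wf,
                    if_neg (by push_neg; linarith)]
                rw [this]
                simp
              · push_neg at hwU
                rw [ENNReal.ofReal_eq_zero.2 (by linarith : 1 - (v + w) ≤ 0), zero_mul]
            · rw [if_neg fun hcon => hw0 hcon.2]
        rw [hfun, lint_Icc hLU (contC n c v)
          (fun w hw => mul_nonneg (by rcases Set.mem_Icc.1 hw with ⟨h1, h2⟩; linarith)
            (Pn_nonneg n _ (harg0 w (Set.mem_Icc.1 hw).1)
              (by rcases Set.mem_Icc.1 hw with ⟨h1, h2⟩; linarith)))]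
        have hsub : ∀ w : ℝ, (1 - v - w) * Pn n (c - 1 + v + w)
            = (fun z => (c - z) * Pn n z) (w + (c - 1 + v)) := by
          intro w
          simp only
          ring_nf
        have hint : (∫ w in L..(1 - v), (1 - v - w) * Pn n (c - 1 + v + w))
            = ∫ z in (max (c - 1 + v) 0)..c, (c - z) * Pn n z := by
          simp_rw [hsub]
          rw [intervalIntegral.integral_comp_add_right (fun z => (c - z) * Pn n z) (c - 1 + v)]
          congr 1
          · rw [hL, ← max_add_add_right]
            have e1 : (0:ℝ) + (c - 1 + v) = c - 1 + v := by ring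
            have e2 : (1 - c - v) + (c - 1 + v) = 0 := by ring
            rw [e1, e2, max_comm]
          · ring
        rw [hint, R1, Set.indicator_of_mem (Set.mem_Icc.2 ⟨h0v, hv1⟩)]
      · rw [Set.indicator_of_notMem hv]
        by_cases hv0 : 0 ≤ v
        · have hv1 : 1 < v := by
            by_contra h
            push_neg at h
            exact hv (Set.mem_Icc.2 ⟨hv0, h⟩)
          have hzero : ∀ w : ℝ, G' (v, w) = 0 := by
            intro w
            show (if 0 ≤ v ∧ 0 ≤ w then
                ENNReal.ofReal (1 - (v + w)) * ENNReal.ofReal (Wf n (c - tau true (v + w)))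
              else 0) = 0
            by_cases hw0 : 0 ≤ w
            · rw [if_pos ⟨hv0, hw0⟩,
                ENNReal.ofReal_eq_zero.2 (by linarith : 1 - (v + w) ≤ 0), zero_mul]
            · rw [if_neg fun hcon => hw0 hcon.2]
          rw [lintegral_congr hzero, lintegral_zero]
        · have hzero : ∀ w : ℝ, G' (v, w) = 0 := fun w => if_neg fun hcon => hv0 hcon.1
          rw [lintegral_congr hzero, lintegral_zero]
    rw [lintegral_congr hE, lint_Icc (by norm_num : (0:ℝ) ≤ 1) (contD n c)
      (fun v hv => Phi_nonneg n c _ (le_max_right _ _)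
        (max_le (by rcases Set.mem_Icc.1 hv with ⟨h1, h2⟩; linarith) hc0) hc)]
    have hsplit : (∫ v in (0:ℝ)..1, Phi n c (max (c - 1 + v) 0))
        = (∫ v in (0:ℝ)..(1 - c), Phi n c (max (c - 1 + v) 0))
          + ∫ v in (1 - c)..1, Phi n c (max (c - 1 + v) 0) :=
      (intervalIntegral.integral_add_adjacent_intervals
        ((contD n c).intervalIntegrable _ _) ((contD n c).intervalIntegrable _ _)).symm
    have h1' : (∫ v in (0:ℝ)..(1 - c), Phi n c (max (c - 1 + v) 0)) = (1 - c) * Phi n c 0 := by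
      rw [intervalIntegral.integral_congr (g := fun _ => Phi n c 0) ?_]
      · rw [intervalIntegral.integral_const, smul_eq_mul, sub_zero]
      · intro v hv
        rw [Set.uIcc_of_le (by linarith : (0:ℝ) ≤ 1 - c)] at hv
        have h : max (c - 1 + v) 0 = 0 := max_eq_right (by rcases hv with ⟨h1, h2⟩; linarith)
        simp only [h]
    have h2' : (∫ v in (1 - c)..1, Phi n c (max (c - 1 + v) 0)) = ∫ t in (0:ℝ)..c, Phi n c t := by
      rw [intervalIntegral.integral_congr (g := fun v => Phi n c (v + (c - 1))) ?_]
      · rw [intervalIntegral.integral_comp_add_right (Phi n c) (c - 1)]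
        congr 1 <;> ring
      · intro v hv
        rw [Set.uIcc_of_le (by linarith : 1 - c ≤ (1:ℝ))] at hv
        have h : max (c - 1 + v) 0 = c - 1 + v := max_eq_left (by rcases hv with ⟨h1, h2⟩; linarith)
        simp only [h]
        ring_nf
    rw [hsplit, h1', h2', R2, R3]
    simp only [Wf, if_pos hc0]

def Sset (n : ℕ) (g : Fin 3) (A : Finset (Fin n)) (c : ℝ) : Set (Fin n × Fin 3 → ℝ) :=
  {x | (∀ p, 0 ≤ x p) ∧ (∀ i, x (i, 0) + x (i, 1) + x (i, 2) ≤ 1) ∧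
    ∑ i : Fin n, (if i ∈ A then 1 - (x (i, g + 1) + x (i, g + 2))
      else x (i, g + 1) + x (i, g + 2)) ≤ c}

lemma isClosed_Sset (n : ℕ) (g : Fin 3) (A : Finset (Fin n)) (c : ℝ) :
    IsClosed (Sset n g A c) := by
  have hrw : Sset n g A c = (⋂ p, {x : Fin n × Fin 3 → ℝ | 0 ≤ x p})
      ∩ ((⋂ i, {x : Fin n × Fin 3 → ℝ | x (i, 0) + x (i, 1) + x (i, 2) ≤ 1})
        ∩ {x : Fin n × Fin 3 → ℝ | ∑ i : Fin n, (if i ∈ A then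
            1 - (x (i, g + 1) + x (i, g + 2)) else x (i, g + 1) + x (i, g + 2)) ≤ c}) := by
    ext x
    simp only [Sset, Set.mem_setOf_eq, Set.mem_inter_iff, Set.mem_iInter]
  rw [hrw]
  refine (isClosed_iInter fun p => isClosed_le continuous_const (continuous_apply p)).inter
    ((isClosed_iInter fun i => isClosed_le (by fun_prop) continuous_const).inter
      (isClosed_le ?_ continuous_const))
  apply continuous_finset_sum
  intro i _
  by_cases hi : i ∈ A <;> simp only [hi, if_true, if_false] <;> fun_prop

def eIdx (n : ℕ) : (Fin 3 ⊕ (Fin n × Fin 3)) ≃ (Fin (n + 1) × Fin 3) where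
  toFun := Sum.elim (fun j => (0, j)) fun p => (p.1.succ, p.2)
  invFun p := Fin.cases (Sum.inl p.2) (fun i => Sum.inr (i, p.2)) p.1
  left_inv := by rintro (j | ⟨i, j⟩) <;> simp
  right_inv := by
    rintro ⟨i, j⟩
    induction i using Fin.cases <;> simp

noncomputable def peel (n : ℕ) : (Fin (n + 1) × Fin 3 → ℝ) ≃ᵐ (Fin 3 → ℝ) × (Fin n × Fin 3 → ℝ) :=
  (MeasurableEquiv.piCongrLeft (fun _ => ℝ) (eIdx n)).symm.trans
    (MeasurableEquiv.sumPiEquivProdPi fun _ => ℝ)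

lemma peel_mp (n : ℕ) : MeasurePreserving (peel n) volume volume := by
  have h1 := MeasurePreserving.symm _
    (volume_measurePreserving_piCongrLeft (fun _ : Fin (n + 1) × Fin 3 => ℝ) (eIdx n))
  exact (volume_measurePreserving_sumPiEquivProdPi (fun _ => ℝ)).comp h1

lemma peel_apply (n : ℕ) (x : Fin (n + 1) × Fin 3 → ℝ) :
    peel n x = (fun j => x (0, j), fun p => x (p.1.succ, p.2)) := rfl

lemma ite_tau (P : Prop) [Decidable P] (s : ℝ) :
    (if P then 1 - s else s) = tau (decide P) s := by
  by_cases h : P <;> simp [tau, h]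

lemma peel_preimage (n : ℕ) (g : Fin 3) (A : Finset (Fin (n + 1))) (c : ℝ) :
    Sset (n + 1) g A c = (peel n) ⁻¹' {yz : (Fin 3 → ℝ) × (Fin n × Fin 3 → ℝ) |
      yz.1 ∈ cube3 ∧ yz.2 ∈ Sset n g (A.preimage Fin.succ (Fin.succ_injective n).injOn)
        (c - (if (0 : Fin (n + 1)) ∈ A then 1 - (yz.1 (g + 1) + yz.1 (g + 2))
          else yz.1 (g + 1) + yz.1 (g + 2)))} := by
  ext x
  simp only [Sset, Set.mem_setOf_eq, Set.mem_preimage, peel_apply, cube3, Finset.mem_preimage,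
    Fin.sum_univ_succ]
  constructor
  · rintro ⟨hpos, hrow, hsum⟩
    exact ⟨⟨fun j => hpos (0, j), hrow 0⟩, fun p => hpos (p.1.succ, p.2), fun i => hrow i.succ,
      by linarith⟩
  · rintro ⟨⟨hy0, hy1⟩, hz0, hz1, hz2⟩
    refine ⟨?_, ?_, by linarith⟩
    · rintro ⟨i, j⟩
      exact Fin.cases (motive := fun i => 0 ≤ x (i, j)) (hy0 j) (fun i' => hz0 (i', j)) i
    · intro i
      exact Fin.cases (motive := fun i => x (i, 0) + x (i, 1) + x (i, 2) ≤ 1) hy1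
        (fun i' => hz1 i') i

lemma main (g : Fin 3) : ∀ (n : ℕ) (A : Finset (Fin n)) (c : ℝ), c ≤ 1 →
    volume (Sset n g A c) = ENNReal.ofReal (Wf n c) := by
  intro n
  induction n with
  | zero =>
    intro A c hc
    by_cases h0 : 0 ≤ c
    · have huniv : Sset 0 g A c = Set.univ := by
        ext x
        simp [Sset, h0]
      rw [huniv, Wf, if_pos h0, Pn_zero]
      have : (volume : Measure (Fin 0 × Fin 3 → ℝ)) Set.univ = 1 := by
        simp [volume_pi, Measure.pi_univ]
      rw [this, ENNReal.ofReal_one]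
    · have hempty : Sset 0 g A c = ∅ := by
        ext x
        simp [Sset, h0]
      rw [hempty, measure_empty, Wf, if_neg h0, ENNReal.ofReal_zero]
  | succ n ih =>
    intro A c hc
    set A' := A.preimage Fin.succ (Fin.succ_injective n).injOn with hA'
    set T : Set ((Fin 3 → ℝ) × (Fin n × Fin 3 → ℝ)) := {yz | yz.1 ∈ cube3 ∧ yz.2 ∈ Sset n g A'
      (c - (if (0 : Fin (n + 1)) ∈ A then 1 - (yz.1 (g + 1) + yz.1 (g + 2))
        else yz.1 (g + 1) + yz.1 (g + 2)))} with hT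
    have hpre : Sset (n + 1) g A c = peel n ⁻¹' T := peel_preimage n g A c
    have hTmeas : MeasurableSet T := by
      have hTeq : T = (peel n).symm ⁻¹' Sset (n + 1) g A c := by
        rw [hpre, ← Set.preimage_comp]
        simp [Function.comp_def]
      rw [hTeq]
      exact (peel n).symm.measurable (isClosed_Sset _ _ _ _).measurableSet
    rw [hpre, (peel_mp n).measure_preimage hTmeas.nullMeasurableSet, Measure.volume_eq_prod,
      Measure.prod_apply hTmeas]
    have hslice : ∀ y : Fin 3 → ℝ, volume (Prod.mk y ⁻¹' T)
        = cube3.indicator (fun y => ENNReal.ofReal (Wf n (c - tau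
            (decide ((0 : Fin (n + 1)) ∈ A)) (y (g + 1) + y (g + 2))))) y := by
      intro y
      by_cases hy : y ∈ cube3
      · have hset : Prod.mk y ⁻¹' T = Sset n g A'
            (c - (if (0 : Fin (n + 1)) ∈ A then 1 - (y (g + 1) + y (g + 2))
              else y (g + 1) + y (g + 2))) := by
          ext z
          simp only [hT, Set.mem_preimage, Set.mem_setOf_eq, hy, true_and]
        obtain ⟨hs0, hs1⟩ := s_bounds hy g
        have hc' : c - (if (0 : Fin (n + 1)) ∈ A then 1 - (y (g + 1) + y (g + 2))
            else y (g + 1) + y (g + 2)) ≤ 1 := by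
          split_ifs <;> linarith
        rw [hset, ih A' _ hc', Set.indicator_of_mem hy, ite_tau]
      · have hset : Prod.mk y ⁻¹' T = ∅ := by
          ext z
          simp only [hT, Set.mem_preimage, Set.mem_setOf_eq, hy, false_and,
            Set.mem_empty_iff_false]
        rw [hset, measure_empty, Set.indicator_of_notMem hy]
    rw [lintegral_congr hslice, inner3 n c hc g _]

/-- For `g ∈ {α,β,γ}` and `A ⊆ [n]`, the normalized volume in `ℤ^{3n}` of
`C_{3,n} ∩ {S_{A,g} ≤ 1−|A|}` equals `∑_{i=0}^n (−2)^i C(n,i)(3n)!/(2n+i)!`. -/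
theorem stmt14 (n : ℕ) (g : Fin 3) (A : Finset (Fin n)) :
    ((3 * n).factorial : ℝ) *
        (volume {x : Fin n × Fin 3 → ℝ |
          (∀ p, 0 ≤ x p) ∧ (∀ i, x (i, 0) + x (i, 1) + x (i, 2) ≤ 1) ∧
          ∑ i ∈ Aᶜ, (x (i, g + 1) + x (i, g + 2))
              - ∑ i ∈ A, (x (i, g + 1) + x (i, g + 2))
            ≤ 1 - (A.card : ℝ)}).toReal
      = ∑ i ∈ Finset.range (n + 1),
          (-2 : ℝ) ^ i * (n.choose i : ℝ) *
            (((3 * n).factorial : ℝ) / ((2 * n + i).factorial : ℝ)) := by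
  have hset : {x : Fin n × Fin 3 → ℝ |
      (∀ p, 0 ≤ x p) ∧ (∀ i, x (i, 0) + x (i, 1) + x (i, 2) ≤ 1) ∧
      ∑ i ∈ Aᶜ, (x (i, g + 1) + x (i, g + 2))
          - ∑ i ∈ A, (x (i, g + 1) + x (i, g + 2))
        ≤ 1 - (A.card : ℝ)} = Sset n g A 1 := by
    ext x
    simp only [Sset, Set.mem_setOf_eq]
    refine and_congr_right fun _ => and_congr_right fun _ => ?_
    have key : ∑ i : Fin n, (if i ∈ A then 1 - (x (i, g + 1) + x (i, g + 2))
          else x (i, g + 1) + x (i, g + 2))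
        = ((A.card : ℝ) - ∑ i ∈ A, (x (i, g + 1) + x (i, g + 2)))
          + ∑ i ∈ Aᶜ, (x (i, g + 1) + x (i, g + 2)) := by
      rw [← Finset.sum_add_sum_compl A (fun i => if i ∈ A then
        1 - (x (i, g + 1) + x (i, g + 2)) else x (i, g + 1) + x (i, g + 2))]
      congr 1
      · rw [Finset.sum_congr rfl (fun i hi => if_pos hi), Finset.sum_sub_distrib,
          Finset.sum_const, nsmul_eq_mul, mul_one]
      · exact Finset.sum_congr rfl fun i hi => if_neg (Finset.mem_compl.1 hi)
    constructor <;> intro h <;> linarith [key]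
  rw [hset, main g n A 1 le_rfl, ENNReal.toReal_ofReal (Wf_nonneg n 1 le_rfl), Wf,
    if_pos (zero_le_one), Pn, Finset.mul_sum]
  apply Finset.sum_congr rfl
  intro k _
  rw [one_pow]
  ring
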